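/- For any positive definite n×n complex matrix X and any ω ∈ ℝ, the linear operator [X]_ω on M_n(ℂ) defined by [X]_ω(A) = ∫₀¹ e^{ω(s-1/2)} X^s A X^{1-s} ds is strictly positive with respect to the Hilbert–Schmidt inner product; that is, ⟨A, [X]_ω(A)⟩ := Tr(A* [X]_ω(A)) ≥ 0 for all A, with equality if and only if A = 0. -/

import Mathlib

open Matrix
open scoped ComplexOrder

attribute [local instance] Matrix.frobeniusNormedAddCommGroup Matrix.frobeniusNormedSpace

/-- Real matrix power via continuous functional calculus. -/
noncomputable def mpow {n : ℕ} (A : Matrix (Fin n) (Fin n) ℂ) (s : ℝ) :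
    Matrix (Fin n) (Fin n) ℂ :=
  cfc (fun x : ℝ => x ^ s) A

/-- The noncommutative multiplication operator `[X]_ω(A) = ∫₀¹ e^{ω(s-1/2)} X^s A X^{1-s} ds`. -/
noncomputable def mop {n : ℕ} (X : Matrix (Fin n) (Fin n) ℂ) (ω : ℝ)
    (A : Matrix (Fin n) (Fin n) ℂ) : Matrix (Fin n) (Fin n) ℂ :=
  ∫ s in (0:ℝ)..1, Real.exp (ω * (s - 1/2)) • (mpow X s * A * mpow X (1 - s))

lemma mpow_eq_diag {n : ℕ} {X : Matrix (Fin n) (Fin n) ℂ} (hX : X.IsHermitian) (s : ℝ) :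
    mpow X s = (hX.eigenvectorUnitary : Matrix (Fin n) (Fin n) ℂ) *
      Matrix.diagonal (fun i => ((hX.eigenvalues i ^ s : ℝ) : ℂ)) *
      star (hX.eigenvectorUnitary : Matrix (Fin n) (Fin n) ℂ) := by
  rw [mpow, hX.cfc_eq, Matrix.IsHermitian.cfc]
  rfl

lemma trace_diag_aux {n : ℕ} (C : Matrix (Fin n) (Fin n) ℂ) (d e : Fin n → ℝ) :
    (Cᴴ * Matrix.diagonal (fun i => (d i : ℂ)) * C *
        Matrix.diagonal (fun j => (e j : ℂ))).trace
      = ((∑ j, ∑ i, d i * e j * Complex.normSq (C i j) : ℝ) : ℂ) := by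
  push_cast
  simp only [Matrix.trace, Matrix.diag, Matrix.mul_apply, Matrix.conjTranspose_apply,
    Matrix.diagonal_apply, mul_ite, ite_mul, mul_zero, zero_mul, Finset.sum_ite_eq,
    Finset.sum_ite_eq', Finset.mem_univ, if_true, Finset.sum_mul]
  congr 1
  ext j
  congr 1
  ext i
  rw [Complex.normSq_eq_conj_mul_self,
    show (starRingEnd ℂ) (C i j) = star (C i j) from rfl]
  ring

/-- For positive definite `X` and `ω ∈ ℝ`, the operator `[X]_ω` is strictly positive with
respect to the Hilbert–Schmidt inner product `⟨A, B⟩ = Tr(Aᴴ B)`. -/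
theorem mop_strictly_positive {n : ℕ}
    (X : Matrix (Fin n) (Fin n) ℂ) (hX : X.PosDef) (ω : ℝ) :
    ∀ A : Matrix (Fin n) (Fin n) ℂ,
      0 ≤ (Aᴴ * mop X ω A).trace ∧ ((Aᴴ * mop X ω A).trace = 0 ↔ A = 0) := by
  intro A
  have hH : X.IsHermitian := hX.1
  set u : Matrix (Fin n) (Fin n) ℂ := (hH.eigenvectorUnitary : Matrix (Fin n) (Fin n) ℂ) with hu
  set v : Matrix (Fin n) (Fin n) ℂ := star u with hv
  have huv : u * v = 1 := Unitary.coe_mul_star_self _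
  have hvu : v * u = 1 := Unitary.coe_star_mul_self _
  set lam : Fin n → ℝ := hH.eigenvalues with hlam
  have hlampos : ∀ i, 0 < lam i := fun i => hX.eigenvalues_pos i
  set C : Matrix (Fin n) (Fin n) ℂ := v * A * u with hC
  have cancel : ∀ M : Matrix (Fin n) (Fin n) ℂ, u * (v * M) = M := fun M => by
    rw [← Matrix.mul_assoc, huv, Matrix.one_mul]
  have cancel' : ∀ M : Matrix (Fin n) (Fin n) ℂ, v * (u * M) = M := fun M => by
    rw [← Matrix.mul_assoc, hvu, Matrix.one_mul]
  have hA2 : A = u * C * v := by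
    rw [hC]
    simp only [Matrix.mul_assoc, huv, Matrix.mul_one, cancel]
  have hAH : Aᴴ = u * Cᴴ * v := by
    conv_lhs => rw [hA2]
    rw [← Matrix.star_eq_conjTranspose, ← Matrix.star_eq_conjTranspose]
    simp only [hv, Matrix.star_mul, star_star, Matrix.mul_assoc]
  set g : ℝ → ℝ := fun s => Real.exp (ω * (s - 1/2)) *
      ∑ j, ∑ i, lam i ^ s * lam j ^ (1 - s) * Complex.normSq (C i j) with hg
  have key : ∀ s : ℝ,
      (Aᴴ * (Real.exp (ω * (s - 1/2)) • (mpow X s * A * mpow X (1 - s)))).trace = (g s : ℂ) := by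
    intro s
    have h1 : Aᴴ * (mpow X s * A * mpow X (1 - s))
        = u * (Cᴴ * Matrix.diagonal (fun i => ((lam i ^ s : ℝ) : ℂ)) * C *
            Matrix.diagonal (fun i => ((lam i ^ (1 - s) : ℝ) : ℂ))) * v := by
      rw [mpow_eq_diag hH, mpow_eq_diag hH, ← hu, ← hv, ← hlam, hAH]
      conv_lhs => rw [hA2]
      simp only [Matrix.mul_assoc, cancel']
    have htr : ∀ N : Matrix (Fin n) (Fin n) ℂ, (u * N * v).trace = N.trace := fun N => by
      rw [Matrix.trace_mul_cycle, hvu, Matrix.one_mul]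
    rw [Matrix.mul_smul, Matrix.trace_smul, h1, htr, trace_diag_aux, hg,
      Complex.real_smul, ← Complex.ofReal_mul]
  -- continuity facts
  have hrc : ∀ i, Continuous fun s : ℝ => lam i ^ s := fun i => by
    have h : (fun s : ℝ => lam i ^ s) = fun s => Real.exp (Real.log (lam i) * s) :=
      funext fun s => Real.rpow_def_of_pos (hlampos i) s
    rw [h]
    exact Real.continuous_exp.comp (continuous_const.mul continuous_id)
  have hexpc : Continuous fun s : ℝ => Real.exp (ω * (s - 1/2)) :=
    Real.continuous_exp.comp (continuous_const.mul (continuous_id.sub continuous_const))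
  have hmpow : Continuous fun s : ℝ => mpow X s := by
    have : (fun s : ℝ => mpow X s) = fun s : ℝ =>
        u * Matrix.diagonal (fun i => ((lam i ^ s : ℝ) : ℂ)) * v :=
      funext fun s => by rw [mpow_eq_diag hH, ← hu, ← hv, ← hlam]
    rw [this]
    exact (continuous_const.matrix_mul
      ((continuous_pi fun i => Complex.continuous_ofReal.comp (hrc i)).matrix_diagonal)).matrix_mul
      continuous_const
  have hFcont : Continuous fun s : ℝ =>
      Real.exp (ω * (s - 1/2)) • (mpow X s * A * mpow X (1 - s)) :=
    hexpc.smul ((hmpow.matrix_mul continuous_const).matrix_mul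
      (hmpow.comp (continuous_const.sub continuous_id)))
  letI : ENormedAddMonoid (Matrix (Fin n) (Fin n) ℂ) :=
    NormedAddCommGroup.toENormedAddCommMonoid.toENormedAddMonoid
  have hInt : IntervalIntegrable
      (fun s : ℝ => Real.exp (ω * (s - 1/2)) • (mpow X s * A * mpow X (1 - s)))
      MeasureTheory.volume 0 1 := hFcont.intervalIntegrable 0 1
  let T : Matrix (Fin n) (Fin n) ℂ →ₗ[ℝ] ℂ :=
    { toFun := fun B => (Aᴴ * B).trace
      map_add' := fun B₁ B₂ => by simp [Matrix.mul_add]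
      map_smul' := fun r B => by simp [Matrix.mul_smul] }
  have hswap : (Aᴴ * mop X ω A).trace
      = ∫ s in (0:ℝ)..1,
          (Aᴴ * (Real.exp (ω * (s - 1/2)) • (mpow X s * A * mpow X (1 - s)))).trace := by
    have h := (LinearMap.toContinuousLinearMap T).intervalIntegral_comp_comm hInt
    rw [mop]
    exact h.symm
  have hg0 : (Aᴴ * mop X ω A).trace = ((∫ s in (0:ℝ)..1, g s : ℝ) : ℂ) := by
    rw [hswap, intervalIntegral.integral_congr (g := fun s => ((g s : ℝ) : ℂ))
      (fun s _ => key s), intervalIntegral.integral_ofReal]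
  have hgnonneg : ∀ s : ℝ, 0 ≤ g s := fun s => by
    apply mul_nonneg (Real.exp_nonneg _)
    refine Finset.sum_nonneg fun j _ => Finset.sum_nonneg fun i _ => ?_
    exact mul_nonneg (mul_nonneg (Real.rpow_nonneg (hlampos i).le _)
      (Real.rpow_nonneg (hlampos j).le _)) (Complex.normSq_nonneg _)
  have hInonneg : 0 ≤ ∫ s in (0:ℝ)..1, g s :=
    intervalIntegral.integral_nonneg (by norm_num) fun s _ => hgnonneg s
  refine ⟨by rw [hg0]; exact_mod_cast hInonneg, ?_⟩
  rw [hg0, Complex.ofReal_eq_zero]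
  constructor
  · intro h0
    by_contra hA0
    have hC0 : C ≠ 0 := fun hc => hA0 (by rw [hA2, hc, Matrix.mul_zero, Matrix.zero_mul])
    have hex : ∃ p : Fin n × Fin n, C p.1 p.2 ≠ 0 := by
      by_contra hall
      push_neg at hall
      exact hC0 (by ext a b; exact hall (a, b))
    obtain ⟨⟨i0, j0⟩, hij⟩ := hex
    have hgcont : Continuous g := by
      rw [hg]
      exact hexpc.mul (continuous_finset_sum _ fun j _ => continuous_finset_sum _ fun i _ =>
        ((hrc i).mul ((hrc j).comp (continuous_const.sub continuous_id))).mul continuous_const)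
    have hpos : 0 < ∫ s in (0:ℝ)..1, g s := by
      refine intervalIntegral.integral_pos (by norm_num) hgcont.continuousOn
        (fun s _ => hgnonneg s) ⟨1/2, by norm_num, ?_⟩
      rw [hg]
      refine mul_pos (Real.exp_pos _) ?_
      refine Finset.sum_pos' (fun j _ => Finset.sum_nonneg fun i _ =>
        mul_nonneg (mul_nonneg (Real.rpow_nonneg (hlampos i).le _)
          (Real.rpow_nonneg (hlampos j).le _)) (Complex.normSq_nonneg _))
        ⟨j0, Finset.mem_univ _, ?_⟩
      refine Finset.sum_pos' (fun i _ =>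
        mul_nonneg (mul_nonneg (Real.rpow_nonneg (hlampos i).le _)
          (Real.rpow_nonneg (hlampos j0).le _)) (Complex.normSq_nonneg _))
        ⟨i0, Finset.mem_univ _, ?_⟩
      exact mul_pos (mul_pos (Real.rpow_pos_of_pos (hlampos i0) _)
        (Real.rpow_pos_of_pos (hlampos j0) _)) (Complex.normSq_pos.mpr hij)
    exact absurd h0 hpos.ne'
  · intro hA0
    have hC0 : C = 0 := by rw [hC, hA0, Matrix.mul_zero, Matrix.zero_mul]
    have hgz : ∀ s, g s = 0 := fun s => by simp [hg, hC0]
    rw [intervalIntegral.integral_congr (g := fun _ => (0:ℝ)) fun s _ => hgz s]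
    simp
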